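/- arXiv:2409.10834 — 2 statements merged into one kernel-verified Lean document; each statement's English description precedes it below -/
import Mathlib

section
/- Let u ∈ C²(ℝⁿ), n ≥ 2. Suppose for every unit vector ν ∈ ℝⁿ there exists λ_ν ∈ ℝ such that: (i) ∂u/∂ν(x) > 0 for all x with x·ν < λ_ν; (ii) ∂u/∂ν(x) < 0 for all x with x·ν > λ_ν; and (iii) u(x − 2(x·ν − λ_ν)ν) = u(x) for all x with x·ν < λ_ν. Then u is radially symmetric about some point x₀ ∈ ℝⁿ: u(x) = u(y) whenever |x − x₀| = |y − x₀|. -/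
open scoped RealInnerProductSpace

section Aux

variable {E : Type*} [NormedAddCommGroup E] [InnerProductSpace ℝ E]

lemma aux_hasDerivAt (u : E → ℝ) (hu : Differentiable ℝ u) (x ν : E) (t : ℝ) :
    HasDerivAt (fun s => u (x + s • ν)) (fderiv ℝ u (x + t • ν) ν) t := by
  have h1 : HasDerivAt (fun s : ℝ => x + s • ν) ν t := by
    simpa using ((hasDerivAt_id t).smul_const ν).const_add x
  exact ((hu (x + t • ν)).hasFDerivAt.comp_hasDerivAt t h1)

lemma aux_inner_shift (ν : E) (hν : ‖ν‖ = 1) (x : E) (t : ℝ) :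
    ⟪x + t • ν, ν⟫ = ⟪x, ν⟫ + t := by
  rw [inner_add_left, real_inner_smul_left, real_inner_self_eq_norm_sq, hν]
  ring

lemma aux_mono (u : E → ℝ) (hu : Differentiable ℝ u) (ν : E) (hν : ‖ν‖ = 1)
    (lam : ℝ) (h1 : ∀ x, ⟪x, ν⟫ < lam → 0 < fderiv ℝ u x ν)
    (x : E) (hx : ⟪x, ν⟫ < lam) :
    u x < u (x + (lam - ⟪x, ν⟫) • ν) := by
  set T := lam - ⟪x, ν⟫ with hT
  have hT0 : 0 < T := by rw [hT]; linarith
  have key : StrictMonoOn (fun s => u (x + s • ν)) (Set.Icc 0 T) := by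
    apply strictMonoOn_of_deriv_pos (convex_Icc 0 T)
    · exact (hu.continuous.comp (by continuity)).continuousOn
    · intro t ht
      rw [interior_Icc] at ht
      rw [(aux_hasDerivAt u hu x ν t).deriv]
      apply h1
      rw [aux_inner_shift ν hν]
      have h2 := ht.2
      rw [hT] at h2
      linarith
  have := key (Set.left_mem_Icc.2 hT0.le) (Set.right_mem_Icc.2 hT0.le) hT0
  simpa using this

lemma aux_inner_refl (ν : E) (hν : ‖ν‖ = 1) (lam : ℝ) (x : E) :
    ⟪x - (2 * (⟪x, ν⟫ - lam)) • ν, ν⟫ = 2 * lam - ⟪x, ν⟫ := by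
  rw [inner_sub_left, real_inner_smul_left, real_inner_self_eq_norm_sq, hν]
  ring

lemma aux_refl_refl (ν : E) (hν : ‖ν‖ = 1) (lam : ℝ) (x : E) :
    (x - (2 * (⟪x, ν⟫ - lam)) • ν) -
      (2 * (⟪x - (2 * (⟪x, ν⟫ - lam)) • ν, ν⟫ - lam)) • ν = x := by
  rw [aux_inner_refl ν hν]
  module

lemma aux_u_refl (u : E → ℝ) (ν : E) (hν : ‖ν‖ = 1) (lam : ℝ)
    (h3 : ∀ x, ⟪x, ν⟫ < lam → u (x - (2 * (⟪x, ν⟫ - lam)) • ν) = u x) (x : E) :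
    u (x - (2 * (⟪x, ν⟫ - lam)) • ν) = u x := by
  rcases lt_trichotomy (⟪x, ν⟫ : ℝ) lam with h | h | h
  · exact h3 x h
  · simp [h]
  · have hx' : ⟪x - (2 * (⟪x, ν⟫ - lam)) • ν, ν⟫ < lam := by
      rw [aux_inner_refl ν hν]; linarith
    have := h3 _ hx'
    rw [aux_refl_refl ν hν] at this
    exact this.symm

lemma aux_step (u : E → ℝ) (hu : Differentiable ℝ u) (ν : E) (hν : ‖ν‖ = 1)
    (lam : ℝ) (h1 : ∀ x, ⟪x, ν⟫ < lam → 0 < fderiv ℝ u x ν)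
    (h3 : ∀ x, ⟪x, ν⟫ < lam → u (x - (2 * (⟪x, ν⟫ - lam)) • ν) = u x)
    (x : E) (hx : ⟪x, ν⟫ ≠ lam) :
    u x < u (x + (lam - ⟪x, ν⟫) • ν) := by
  rcases lt_or_gt_of_ne hx with h | h
  · exact aux_mono u hu ν hν lam h1 x h
  · set y := x - (2 * (⟪x, ν⟫ - lam)) • ν with hy
    have hyν : ⟪y, ν⟫ = 2 * lam - ⟪x, ν⟫ := aux_inner_refl ν hν lam x
    have hylt : ⟪y, ν⟫ < lam := by rw [hyν]; linarith
    have h1' : u y = u x := aux_u_refl u ν hν lam h3 x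
    have h2' : u y < u (y + (lam - ⟪y, ν⟫) • ν) := aux_mono u hu ν hν lam h1 y hylt
    have h3' : y + (lam - ⟪y, ν⟫) • ν = x + (lam - ⟪x, ν⟫) • ν := by
      rw [hyν, hy]; module
    rw [h3', h1'] at h2'
    exact h2'

end Aux

theorem stmt_8 {n : ℕ} (hn : 2 ≤ n) (u : EuclideanSpace ℝ (Fin n) → ℝ)
    (hu : ContDiff ℝ 2 u)
    (H : ∀ ν : EuclideanSpace ℝ (Fin n), ‖ν‖ = 1 → ∃ lam : ℝ,
      (∀ x : EuclideanSpace ℝ (Fin n), (inner ℝ x ν : ℝ) < lam → 0 < fderiv ℝ u x ν) ∧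
      (∀ x : EuclideanSpace ℝ (Fin n), lam < (inner ℝ x ν : ℝ) → fderiv ℝ u x ν < 0) ∧
      (∀ x : EuclideanSpace ℝ (Fin n), (inner ℝ x ν : ℝ) < lam →
        u (x - (2 * ((inner ℝ x ν : ℝ) - lam)) • ν) = u x)) :
    ∃ x₀ : EuclideanSpace ℝ (Fin n),
      ∀ x y : EuclideanSpace ℝ (Fin n), ‖x - x₀‖ = ‖y - x₀‖ → u x = u y := by
  have hud : Differentiable ℝ u := hu.differentiable (by norm_num)
  set e : Fin n → EuclideanSpace ℝ (Fin n) := fun i => EuclideanSpace.single i (1 : ℝ)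
    with he
  have hν : ∀ i, ‖e i‖ = 1 := fun i => by simp [he]
  choose lam h1 h2 h3 using fun i => H (e i) (hν i)
  set x₀ : EuclideanSpace ℝ (Fin n) := (WithLp.equiv 2 _).symm (fun i => lam i) with hx₀
  have hx₀i : ∀ i, x₀ i = lam i := fun i => rfl
  have hinner : ∀ (x : EuclideanSpace ℝ (Fin n)) (i : Fin n), ⟪x, e i⟫ = x i := by
    intro x i
    simp [he, EuclideanSpace.inner_single_right]
  -- key induction: moving coordinates to lam increases u
  have key : ∀ s : Finset (Fin n), ∀ x : EuclideanSpace ℝ (Fin n),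
      (∀ j, j ∉ s → x j = lam j) → x = x₀ ∨ u x < u x₀ := by
    intro s
    induction s using Finset.induction_on with
    | empty =>
      intro x hx
      left
      ext j
      exact (hx j (by simp)).trans (hx₀i j).symm
    | @insert i s hi ih =>
      intro x hx
      by_cases hxi : x i = lam i
      · exact ih x (by
          intro j hj
          by_cases hji : j = i
          · subst hji; exact hxi
          · exact hx j (by simp [hji, hj]))
      · set y : EuclideanSpace ℝ (Fin n) := x + (lam i - ⟪x, e i⟫) • e i with hy
        have hxin : ⟪x, e i⟫ ≠ lam i := by rw [hinner]; exact hxi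
        have hlt : u x < u y := aux_step u hud (e i) (hν i) (lam i) (h1 i) (h3 i) x hxin
        have hyapp : ∀ j, y j = x j + (lam i - x i) * (if j = i then (1:ℝ) else 0) := by
          intro j
          rw [hy]
          simp [he, PiLp.add_apply, PiLp.smul_apply, hinner, EuclideanSpace.inner_single_right,
            EuclideanSpace.single_apply, smul_eq_mul]
        have hycoord : ∀ j, j ∉ s → y j = lam j := by
          intro j hj
          by_cases hji : j = i
          · subst hji; rw [hyapp]; simp
          · rw [hyapp]
            simp only [hji, if_false, mul_zero, add_zero]
            exact hx j (by simp [hji, hj])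
        rcases ih y hycoord with hmid | hmid
        · right; rw [← hmid]; exact hlt
        · right; exact hlt.trans hmid
  have hmax : ∀ x : EuclideanSpace ℝ (Fin n), x ≠ x₀ → u x < u x₀ := by
    intro x hx
    rcases key Finset.univ x (by simp) with h | h
    · exact absurd h hx
    · exact h
  -- every hyperplane passes through x₀
  have hlam : ∀ ν : EuclideanSpace ℝ (Fin n), ∀ hν' : ‖ν‖ = 1,
      ∀ lam' : ℝ,
      (∀ x, (⟪x, ν⟫ : ℝ) < lam' → u (x - (2 * (⟪x, ν⟫ - lam')) • ν) = u x) →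
      lam' = ⟪x₀, ν⟫ := by
    intro ν hν' lam' h3'
    have hfix : x₀ - (2 * (⟪x₀, ν⟫ - lam')) • ν = x₀ := by
      by_contra hne
      have := hmax _ hne
      rw [aux_u_refl u ν hν' lam' h3' x₀] at this
      exact lt_irrefl _ this
    have h0 : (2 * (⟪x₀, ν⟫ - lam')) • ν = 0 := by
      have := sub_eq_self.mp hfix
      exact this
    have hν0 : ν ≠ 0 := by
      intro h; rw [h] at hν'; simp at hν'
    rcases smul_eq_zero.mp h0 with h | h
    · linarith [h]
    · exact absurd h hν0
  refine ⟨x₀, fun x y hxy => ?_⟩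
  by_cases hxyeq : x = y
  · rw [hxyeq]
  · have hd : ‖x - y‖ ≠ 0 := by
      simp only [norm_ne_zero_iff, sub_ne_zero]; exact hxyeq
    have hdpos : 0 < ‖x - y‖ := lt_of_le_of_ne (norm_nonneg _) (Ne.symm hd)
    set ν : EuclideanSpace ℝ (Fin n) := ‖x - y‖⁻¹ • (x - y) with hνdef
    have hν1 : ‖ν‖ = 1 := by
      rw [hνdef, norm_smul, norm_inv, norm_norm, inv_mul_cancel₀ hd]
    obtain ⟨lam', h1', h2', h3'⟩ := H ν hν1
    have hlam' : lam' = ⟪x₀, ν⟫ := hlam ν hν1 lam' h3'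
    -- geometric computation
    have hsq : ⟪x - x₀, x - x₀⟫ = ⟪y - x₀, y - x₀⟫ := by
      rw [real_inner_self_eq_norm_sq, real_inner_self_eq_norm_sq, hxy]
    have hkey : 2 * ⟪x - x₀, x - y⟫ = ‖x - y‖ ^ 2 := by
      have expand : x - x₀ = (x - y) + (y - x₀) := by abel
      have e1 : ⟪x - x₀, x - x₀⟫ =
          ‖x - y‖ ^ 2 + 2 * ⟪x - y, y - x₀⟫ + ⟪y - x₀, y - x₀⟫ := by
        rw [expand, inner_add_left, inner_add_right, inner_add_right,
          real_inner_comm (y - x₀) (x - y), real_inner_self_eq_norm_sq]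
        ring
      have e2 : ⟪x - x₀, x - y⟫ = ‖x - y‖ ^ 2 + ⟪x - y, y - x₀⟫ := by
        rw [expand, inner_add_left, real_inner_self_eq_norm_sq,
          real_inner_comm (y - x₀) (x - y)]
      linarith [hsq, e1, e2]
    have hfactor : 2 * (⟪x, ν⟫ - lam') = ‖x - y‖ := by
      rw [hlam']
      have : ⟪x, ν⟫ - ⟪x₀, ν⟫ = ⟪x - x₀, ν⟫ := (inner_sub_left _ _ _).symm
      rw [this, hνdef, real_inner_smul_right]
      have h' : ⟪x - x₀, x - y⟫ = ‖x - y‖ ^ 2 / 2 := by linarith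
      rw [h']
      field_simp
    have hrefl : x - (2 * (⟪x, ν⟫ - lam')) • ν = y := by
      rw [hfactor, hνdef, smul_smul, mul_inv_cancel₀ hd, one_smul]
      abel
    have := aux_u_refl u ν hν1 lam' h3' x
    rw [hrefl] at this
    exact this.symm
end

section
/- Let n ≥ 2, let f : [0,∞) → ℝ be C¹ with f ≥ 0 and f(s) > 0 for s > 0, and let u ∈ C²(ℝⁿ) be a positive solution of Δu + f(u) = 0 on ℝⁿ. Suppose for every unit vector ν ∈ ℝⁿ there exists λ_ν ∈ ℝ such that: (i) ∂u/∂ν(x) ≥ 0 for x·ν < λ_ν; (ii) ∂u/∂ν(x) ≤ 0 for x·ν > λ_ν; (iii) u(x − 2(x·ν − λ_ν)ν) = u(x) for all x with x·ν < λ_ν; and (iv) the map ν ↦ λ_ν is continuous on the unit sphere S^{n−1}. Then u is radially symmetric about some point x₀ ∈ ℝⁿ. -/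
/-- Second directional derivative in coordinate direction `i`. -/
noncomputable def secondDeriv {n : ℕ} (u : EuclideanSpace ℝ (Fin n) → ℝ)
    (x : EuclideanSpace ℝ (Fin n)) (i : Fin n) : ℝ :=
  fderiv ℝ (fun y => fderiv ℝ u y (EuclideanSpace.single i 1)) x (EuclideanSpace.single i 1)

/-- The Laplacian as the sum of second coordinate derivatives. -/
noncomputable def laplacian {n : ℕ} (u : EuclideanSpace ℝ (Fin n) → ℝ)
    (x : EuclideanSpace ℝ (Fin n)) : ℝ :=
  ∑ i : Fin n, secondDeriv u x i

open Filter Topology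

lemma mono_up {n : ℕ} {u : EuclideanSpace ℝ (Fin n) → ℝ} (hu : ContDiff ℝ 2 u)
    (ν : EuclideanSpace ℝ (Fin n)) (hν : ‖ν‖ = 1) (L : ℝ)
    (hH : ∀ x : EuclideanSpace ℝ (Fin n), (inner ℝ x ν : ℝ) < L → 0 ≤ fderiv ℝ u x ν)
    (x : EuclideanSpace ℝ (Fin n)) (t : ℝ) (ht : 0 ≤ t)
    (h2 : (inner ℝ x ν : ℝ) + t ≤ L) :
    u x ≤ u (x + t • ν) := by
  have hud : Differentiable ℝ u := hu.differentiable two_ne_zero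
  set g : ℝ → ℝ := fun s => u (x + s • ν) with hg
  have hder : ∀ s : ℝ, HasDerivAt g (fderiv ℝ u (x + s • ν) ν) s := by
    intro s
    have hline : HasDerivAt (fun s : ℝ => x + s • ν) ν s := by
      simpa using ((hasDerivAt_id s).smul_const ν).const_add x
    exact (hud (x + s • ν)).hasFDerivAt.comp_hasDerivAt s hline
  have hmono : MonotoneOn g (Set.Icc 0 t) := by
    apply monotoneOn_of_deriv_nonneg (convex_Icc 0 t)
    · exact (hu.continuous.comp (by continuity)).continuousOn
    · intro s _
      exact ((hder s).differentiableAt).differentiableWithinAt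
    · intro s hs
      rw [interior_Icc] at hs
      rw [(hder s).deriv]
      apply hH
      have hin : (inner ℝ (x + s • ν) ν : ℝ) = (inner ℝ x ν : ℝ) + s := by
        rw [inner_add_left, real_inner_smul_left, real_inner_self_eq_norm_sq, hν]; ring
      rw [hin]; linarith [hs.2]
  simpa [hg] using hmono (Set.left_mem_Icc.mpr ht) (Set.right_mem_Icc.mpr ht) ht

lemma mono_down {n : ℕ} {u : EuclideanSpace ℝ (Fin n) → ℝ} (hu : ContDiff ℝ 2 u)
    (ν : EuclideanSpace ℝ (Fin n)) (hν : ‖ν‖ = 1) (L : ℝ)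
    (hH : ∀ x : EuclideanSpace ℝ (Fin n), L < (inner ℝ x ν : ℝ) → fderiv ℝ u x ν ≤ 0)
    (x : EuclideanSpace ℝ (Fin n)) (t : ℝ) (ht : t ≤ 0)
    (h2 : L ≤ (inner ℝ x ν : ℝ) + t) :
    u x ≤ u (x + t • ν) := by
  have h := mono_up hu (-ν) (by simpa using hν) (-L)
    (fun y hy => by
      have hy' : L < (inner ℝ y ν : ℝ) := by
        have : (inner ℝ y (-ν) : ℝ) = -(inner ℝ y ν : ℝ) := by simp
        rw [this] at hy; linarith
      have h2 := hH y hy'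
      rw [map_neg]; linarith)
    x (-t) (by linarith)
    (by
      have : (inner ℝ x (-ν) : ℝ) = -(inner ℝ x ν : ℝ) := by simp
      rw [this]; linarith)
  simpa using h

theorem stmt_9 {n : ℕ} (hn : 2 ≤ n) (f : ℝ → ℝ)
    (hf : ContDiffOn ℝ 1 f (Set.Ici 0)) (hf0 : ∀ s ∈ Set.Ici (0:ℝ), 0 ≤ f s)
    (hfpos : ∀ s > (0:ℝ), 0 < f s)
    (u : EuclideanSpace ℝ (Fin n) → ℝ) (hu : ContDiff ℝ 2 u)
    (hupos : ∀ x, 0 < u x)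
    (hpde : ∀ x, laplacian u x + f (u x) = 0)
    (lam : EuclideanSpace ℝ (Fin n) → ℝ)
    (hlamcont : ContinuousOn lam (Metric.sphere (0 : EuclideanSpace ℝ (Fin n)) 1))
    (H : ∀ ν : EuclideanSpace ℝ (Fin n), ‖ν‖ = 1 →
      (∀ x : EuclideanSpace ℝ (Fin n), (inner ℝ x ν : ℝ) < lam ν → 0 ≤ fderiv ℝ u x ν) ∧
      (∀ x : EuclideanSpace ℝ (Fin n), lam ν < (inner ℝ x ν : ℝ) → fderiv ℝ u x ν ≤ 0) ∧
      (∀ x : EuclideanSpace ℝ (Fin n), (inner ℝ x ν : ℝ) < lam ν →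
        u (x - (2 * ((inner ℝ x ν : ℝ) - lam ν)) • ν) = u x)) :
    ∃ x₀ : EuclideanSpace ℝ (Fin n),
      ∀ x y : EuclideanSpace ℝ (Fin n), ‖x - x₀‖ = ‖y - x₀‖ → u x = u y := by
  classical
  set e : Fin n → EuclideanSpace ℝ (Fin n) := fun i => EuclideanSpace.single i 1 with he
  have hne : ∀ i, ‖e i‖ = 1 := fun i => by simp [he]
  set x₀ : EuclideanSpace ℝ (Fin n) :=
    (WithLp.equiv 2 _).symm (fun i => lam (e i)) with hx₀
  have hx₀i : ∀ i, x₀ i = lam (e i) := fun i => rfl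
  -- x₀ is a global maximum
  have hmax : ∀ x, u x ≤ u x₀ := by
    intro x
    have key : ∀ s : Finset (Fin n),
        u x ≤ u ((WithLp.equiv 2 _).symm (fun j => if j ∈ s then lam (e j) else x j)) := by
      intro s
      induction s using Finset.induction_on with
      | empty =>
        have : (WithLp.equiv 2 _).symm (fun j => if j ∈ (∅ : Finset (Fin n)) then lam (e j) else x j) = x := by
          ext j; simp
        rw [this]
      | @insert i s hi ih =>
        set y : EuclideanSpace ℝ (Fin n) :=
          (WithLp.equiv 2 _).symm (fun j => if j ∈ s then lam (e j) else x j) with hy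
        have hyi : (inner ℝ y (e i) : ℝ) = x i := by
          rw [he]
          rw [EuclideanSpace.inner_single_right]
          simp [hy, hi]
        have hstep : (WithLp.equiv 2 _).symm
            (fun j => if j ∈ insert i s then lam (e j) else x j)
            = y + (lam (e i) - x i) • e i := by
          ext j
          by_cases hj : j = i
          · subst hj
            simp [hy, he, EuclideanSpace.single_apply, hi]
          · simp [hy, he, EuclideanSpace.single_apply, hj]
        rw [hstep]
        refine le_trans ih ?_
        rcases le_or_gt 0 (lam (e i) - x i) with hc | hc
        · exact mono_up hu (e i) (hne i) (lam (e i)) (H (e i) (hne i)).1 y _ hc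
            (by rw [hyi]; ring_nf; exact le_refl _)
        · exact mono_down hu (e i) (hne i) (lam (e i)) (H (e i) (hne i)).2.1 y _ hc.le
            (by rw [hyi]; ring_nf; exact le_refl _)
    have := key Finset.univ
    have huniv : (WithLp.equiv 2 _).symm (fun j => if j ∈ (Finset.univ : Finset (Fin n)) then lam (e j) else x j) = x₀ := by
      ext j; simp [hx₀i]
    rwa [huniv] at this
  -- every lam ν equals ⟪x₀, ν⟫
  have hkey : ∀ ν : EuclideanSpace ℝ (Fin n), ‖ν‖ = 1 → lam ν = (inner ℝ x₀ ν : ℝ) := by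
    intro ν₀ hν₀
    by_contra hne0
    set μ : EuclideanSpace ℝ (Fin n) → ℝ := fun ν => lam ν - (inner ℝ x₀ ν : ℝ) with hμ
    have hμ0 : μ ν₀ ≠ 0 := sub_ne_zero.mpr hne0
    obtain ⟨ε, hεdef⟩ : ∃ ε : ℝ, ε = |μ ν₀| / 2 := ⟨_, rfl⟩
    have hεpos : 0 < ε := by
      have := abs_pos.mpr hμ0
      rw [hεdef]; linarith
    have hμcont : ContinuousOn μ (Metric.sphere 0 1) :=
      hlamcont.sub ((continuous_const.inner continuous_id).continuousOn)
    have hν₀mem : ν₀ ∈ Metric.sphere (0 : EuclideanSpace ℝ (Fin n)) 1 := by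
      simpa [mem_sphere_zero_iff_norm] using hν₀
    have hmem : μ ⁻¹' Metric.ball (μ ν₀) ε ∈ nhdsWithin ν₀ (Metric.sphere 0 1) :=
      hμcont ν₀ hν₀mem (Metric.ball_mem_nhds _ hεpos)
    obtain ⟨O, hO, hν₀O, hOsub⟩ := mem_nhdsWithin.mp hmem
    set s : ℝ := if 0 < μ ν₀ then 1 else -1 with hs
    have hs1 : s * s = 1 := by rw [hs]; split_ifs <;> norm_num
    have habs_s : |s| = 1 := by rw [hs]; split_ifs <;> norm_num
    have hμbig : ∀ ν ∈ O, ν ∈ Metric.sphere (0 : EuclideanSpace ℝ (Fin n)) 1 →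
        ε < s * μ ν := by
      intro ν hνO hsph
      have hd := hOsub ⟨hνO, hsph⟩
      rw [Set.mem_preimage, Metric.mem_ball, Real.dist_eq] at hd
      have habs := abs_lt.mp hd
      by_cases h0 : 0 < μ ν₀
      · have hs' : s = 1 := by rw [hs, if_pos h0]
        have ha : |μ ν₀| = μ ν₀ := abs_of_pos h0
        rw [hs', one_mul]
        linarith [habs.1]
      · have hs' : s = -1 := by rw [hs, if_neg h0]
        have hμneg : μ ν₀ < 0 := lt_of_le_of_ne (not_lt.mp h0) hμ0
        have ha : |μ ν₀| = -μ ν₀ := abs_of_neg hμneg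
        rw [hs']
        linarith [habs.2]
    -- u equals its max on a cone of segments
    have hseg : ∀ ν ∈ O, ‖ν‖ = 1 → ∀ t : ℝ, 0 ≤ t → t < ε →
        u (x₀ + (s * t) • ν) = u x₀ := by
      intro ν hνO hν t ht htε
      have hb := hμbig ν hνO (by simpa [mem_sphere_zero_iff_norm] using hν)
      have hμν : μ ν = lam ν - (inner ℝ x₀ ν : ℝ) := rfl
      refine le_antisymm (hmax _) ?_
      by_cases h0 : 0 < μ ν₀
      · have hs' : s = 1 := by rw [hs, if_pos h0]
        rw [hs'] at hb ⊢
        exact mono_up hu ν hν (lam ν) (H ν hν).1 x₀ (1 * t) (by linarith)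
          (by rw [hμν] at hb; linarith)
      · have hs' : s = -1 := by rw [hs, if_neg h0]
        rw [hs'] at hb ⊢
        exact mono_down hu ν hν (lam ν) (H ν hν).2.1 x₀ ((-1) * t) (by linarith)
          (by rw [hμν] at hb; linarith)
    -- an open set where u is constant equal to its max
    set F : EuclideanSpace ℝ (Fin n) → EuclideanSpace ℝ (Fin n) :=
      fun x => (s * ‖x - x₀‖⁻¹) • (x - x₀) with hF
    have hFc : ContinuousOn F ({x₀}ᶜ : Set (EuclideanSpace ℝ (Fin n))) := by
      refine ContinuousOn.smul (f := fun x => s * ‖x - x₀‖⁻¹) (g := fun x => x - x₀) ?_ ?_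
      · exact continuousOn_const.mul
          (((continuous_id.sub continuous_const).norm).continuousOn.inv₀
            (fun x hx => by
              exact norm_ne_zero_iff.mpr (sub_ne_zero.mpr hx)))
      · exact (continuous_id.sub continuous_const).continuousOn
    set U : Set (EuclideanSpace ℝ (Fin n)) :=
      (({x₀}ᶜ : Set (EuclideanSpace ℝ (Fin n))) ∩ Metric.ball x₀ ε) ∩ F ⁻¹' O with hU
    have hUopen : IsOpen U :=
      ContinuousOn.isOpen_inter_preimage (hFc.mono Set.inter_subset_left)
        (isOpen_compl_singleton.inter Metric.isOpen_ball) hO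
    set p : EuclideanSpace ℝ (Fin n) := x₀ + (s * (ε / 2)) • ν₀ with hp
    have hpsub : p - x₀ = (s * (ε / 2)) • ν₀ := by rw [hp]; abel
    have hpnorm : ‖p - x₀‖ = ε / 2 := by
      rw [hpsub, norm_smul, Real.norm_eq_abs, abs_mul, habs_s, hν₀,
        abs_of_pos (by linarith : (0:ℝ) < ε / 2)]
      ring
    have hpU : p ∈ U := by
      refine ⟨⟨?_, ?_⟩, ?_⟩
      · intro hmem'
        have : p - x₀ = 0 := by rw [Set.mem_singleton_iff.mp hmem']; abel
        rw [this] at hpnorm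
        simp at hpnorm
        linarith
      · rw [Metric.mem_ball, dist_eq_norm, hpnorm]; linarith
      · have : F p = ν₀ := by
          show (s * ‖p - x₀‖⁻¹) • (p - x₀) = ν₀
          rw [hpnorm, hpsub, smul_smul]
          have hcoef : s * (ε / 2)⁻¹ * (s * (ε / 2)) = 1 := by
            rw [show s * (ε / 2)⁻¹ * (s * (ε / 2)) = (s * s) * ((ε / 2) * (ε / 2)⁻¹) by ring,
              hs1, mul_inv_cancel₀ (by linarith : (ε / 2 : ℝ) ≠ 0)]
            norm_num
          rw [hcoef, one_smul]
        rw [Set.mem_preimage, this]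
        exact hν₀O
    have hUconst : ∀ x ∈ U, u x = u x₀ := by
      rintro x ⟨⟨hx1, hx2⟩, hx3⟩
      have hxne : x - x₀ ≠ 0 := sub_ne_zero.mpr (by simpa using hx1)
      have hnne : ‖x - x₀‖ ≠ 0 := norm_ne_zero_iff.mpr hxne
      have hFnorm : ‖F x‖ = 1 := by
        show ‖(s * ‖x - x₀‖⁻¹) • (x - x₀)‖ = 1
        rw [norm_smul, Real.norm_eq_abs, abs_mul, habs_s, abs_inv, abs_norm]
        field_simp
      have hxeq : x₀ + (s * ‖x - x₀‖) • F x = x := by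
        show x₀ + (s * ‖x - x₀‖) • ((s * ‖x - x₀‖⁻¹) • (x - x₀)) = x
        rw [smul_smul]
        have hcoef : s * ‖x - x₀‖ * (s * ‖x - x₀‖⁻¹) = 1 := by
          rw [show s * ‖x - x₀‖ * (s * ‖x - x₀‖⁻¹) = (s * s) * (‖x - x₀‖ * ‖x - x₀‖⁻¹) by ring,
            hs1, mul_inv_cancel₀ hnne]
          norm_num
        rw [hcoef, one_smul]
        abel
      have := hseg (F x) hx3 hFnorm ‖x - x₀‖ (norm_nonneg _)
        (by rwa [Metric.mem_ball, dist_eq_norm] at hx2)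
      rwa [hxeq] at this
    obtain ⟨r, hrpos, hrsub⟩ := Metric.isOpen_iff.mp hUopen p hpU
    -- Laplacian vanishes at p
    have hfderiv0 : ∀ y ∈ Metric.ball p r, fderiv ℝ u y = 0 := by
      intro y hy
      have hev : u =ᶠ[nhds y] fun _ => u x₀ :=
        Filter.eventuallyEq_of_mem (Metric.isOpen_ball.mem_nhds hy)
          (fun z hz => hUconst z (hrsub hz))
      rw [hev.fderiv_eq]
      exact fderiv_const_apply _
    have hlap0 : laplacian u p = 0 := by
      unfold laplacian secondDeriv
      apply Finset.sum_eq_zero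
      intro i _
      have hev : (fun y => fderiv ℝ u y (EuclideanSpace.single i 1)) =ᶠ[nhds p]
          fun _ => (0 : ℝ) :=
        Filter.eventuallyEq_of_mem
          (Metric.isOpen_ball.mem_nhds (Metric.mem_ball_self hrpos))
          (fun z hz => by rw [hfderiv0 z hz]; rfl)
      rw [hev.fderiv_eq, fderiv_const_apply]
      rfl
    have := hpde p
    rw [hlap0] at this
    have := hfpos (u p) (hupos p)
    linarith
  -- conclude radial symmetry
  refine ⟨x₀, ?_⟩
  intro x y hxy
  by_cases hxyeq : x = y
  · rw [hxyeq]
  have hd : x - y ≠ 0 := sub_ne_zero.mpr hxyeq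
  have hdn : ‖x - y‖ ≠ 0 := norm_ne_zero_iff.mpr hd
  set ν : EuclideanSpace ℝ (Fin n) := ‖x - y‖⁻¹ • (x - y) with hν
  have hν1 : ‖ν‖ = 1 := by
    rw [hν, norm_smul, Real.norm_eq_abs, abs_inv, abs_norm]
    field_simp
  have hlamν : lam ν = (inner ℝ x₀ ν : ℝ) := hkey ν hν1
  have hinner1 : (inner ℝ (y - x₀) (x - y) : ℝ) = -(‖x - y‖ ^ 2) / 2 := by
    have hns := norm_sub_sq_real (x - x₀) (y - x₀)
    have hxyz : (x - x₀) - (y - x₀) = x - y := by abel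
    rw [hxyz, hxy] at hns
    have hexp : (inner ℝ (y - x₀) (x - y) : ℝ)
        = (inner ℝ (x - x₀) (y - x₀) : ℝ) - ‖y - x₀‖ ^ 2 := by
      have : x - y = (x - x₀) - (y - x₀) := by abel
      rw [this, inner_sub_right, real_inner_comm (y - x₀) (x - x₀),
        real_inner_self_eq_norm_sq]
    rw [hexp]
    nlinarith [hns]
  have hinner2 : (inner ℝ y ν : ℝ) - lam ν = -(‖x - y‖) / 2 := by
    rw [hlamν]
    have : (inner ℝ y ν : ℝ) - (inner ℝ x₀ ν : ℝ) = (inner ℝ (y - x₀) ν : ℝ) := by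
      rw [inner_sub_left]
    rw [this, hν, real_inner_smul_right, hinner1]
    field_simp
  have hlt : (inner ℝ y ν : ℝ) < lam ν := by
    have h1 : (0:ℝ) < ‖x - y‖ := lt_of_le_of_ne (norm_nonneg _) (Ne.symm hdn)
    linarith [hinner2]
  have hrefl := (H ν hν1).2.2 y hlt
  have hvec : y - (2 * ((inner ℝ y ν : ℝ) - lam ν)) • ν = x := by
    rw [hinner2]
    have : (2 * (-(‖x - y‖) / 2)) = -‖x - y‖ := by ring
    rw [this, hν, smul_smul]
    have hcoef : -‖x - y‖ * ‖x - y‖⁻¹ = -1 := by field_simp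
    rw [hcoef]
    simp
  rw [hvec] at hrefl
  exact hrefl
end
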